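/- Correctness for λFm: for every System F type A with no free type variables (eigenvariables allowed), the verifier accepts the generator, i.e. ⟨A⟩(✠A) weak-head reduces in zero or more steps to ⋆. -/
import Mathlib


/-! The second-order metacalculus λFm: System F types (with eigenvariables) and
metaterms extended with ⋆, guards, generators ✠A, verifiers ⟨A⟩ and fresh
eigenvariable introduction ν𝐚.M. Type variables use de Bruijn indices, bound by
∀ (in types) and Λ (in terms); eigenvariables are named (natural numbers). -/

/-- System F types with eigenvariables: A ::= a | 𝐚 | A⇒B | ∀a.A. -/
inductive FTy : Type
  | tvar : ℕ → FTy
  | eig : ℕ → FTy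
  | arrow : FTy → FTy → FTy
  | all : FTy → FTy

namespace FTy

/-- Shift type-variable indices ≥ c by d. -/
def shift (d c : ℕ) : FTy → FTy
  | tvar n => if n < c then tvar n else tvar (n + d)
  | eig e => eig e
  | arrow A B => arrow (shift d c A) (shift d c B)
  | all A => all (shift d (c+1) A)

/-- Substitute the type variable k by B. -/
def subst (k : ℕ) (B : FTy) : FTy → FTy
  | tvar n => if n = k then B else if k < n then tvar (n-1) else tvar n
  | eig e => eig e
  | arrow A C => arrow (subst k B A) (subst k B C)
  | all A => all (subst (k+1) (shift 1 0 B) A)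

/-- The (free) eigenvariables of a type. -/
def eigs : FTy → Finset ℕ
  | tvar _ => ∅
  | eig e => {e}
  | arrow A B => A.eigs ∪ B.eigs
  | all A => A.eigs

/-- A type has no free type variables below cutoff c (eigenvariables allowed). -/
def TvClosed : FTy → ℕ → Prop
  | tvar n, c => n < c
  | eig _, _ => True
  | arrow A B, c => A.TvClosed c ∧ B.TvClosed c
  | all A, c => A.TvClosed (c+1)

end FTy

/-- Metaterms of λFm: M ::= x | λx.M | M N | Λa.M | M A | ⋆ | (M;N) | ✠A | ⟨A⟩M | ν𝐚.M. -/
inductive MTm : Type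
  | var : ℕ → MTm
  | lam : MTm → MTm
  | app : MTm → MTm → MTm
  | tlam : MTm → MTm
  | tapp : MTm → FTy → MTm
  | star : MTm
  | guard : MTm → MTm → MTm
  | gen : FTy → MTm
  | verif : FTy → MTm → MTm
  | nu : ℕ → MTm → MTm

namespace MTm

/-- Shift term-variable indices ≥ c by d. -/
def shift (d c : ℕ) : MTm → MTm
  | var n => if n < c then var n else var (n + d)
  | lam M => lam (shift d (c+1) M)
  | app M N => app (shift d c M) (shift d c N)
  | tlam M => tlam (shift d c M)
  | tapp M A => tapp (shift d c M) A
  | star => star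
  | guard M N => guard (shift d c M) (shift d c N)
  | gen A => gen A
  | verif A M => verif A (shift d c M)
  | nu e M => nu e (shift d c M)

/-- Shift type-variable indices ≥ c by d, in a metaterm. -/
def tshift (d c : ℕ) : MTm → MTm
  | var n => var n
  | lam M => lam (tshift d c M)
  | app M N => app (tshift d c M) (tshift d c N)
  | tlam M => tlam (tshift d (c+1) M)
  | tapp M A => tapp (tshift d c M) (FTy.shift d c A)
  | star => star
  | guard M N => guard (tshift d c M) (tshift d c N)
  | gen A => gen (FTy.shift d c A)
  | verif A M => verif (FTy.shift d c A) (tshift d c M)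
  | nu e M => nu e (tshift d c M)

/-- Substitute the term variable k by N. -/
def subst (k : ℕ) (N : MTm) : MTm → MTm
  | var n => if n = k then N else if k < n then var (n-1) else var n
  | lam M => lam (subst (k+1) (shift 1 0 N) M)
  | app M P => app (subst k N M) (subst k N P)
  | tlam M => tlam (subst k (tshift 1 0 N) M)
  | tapp M A => tapp (subst k N M) A
  | star => star
  | guard M P => guard (subst k N M) (subst k N P)
  | gen A => gen A
  | verif A M => verif A (subst k N M)
  | nu e M => nu e (subst k N M)

/-- Substitute the type variable k by the type A, in a metaterm. -/
def tsubst (k : ℕ) (A : FTy) : MTm → MTm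
  | var n => var n
  | lam M => lam (tsubst k A M)
  | app M N => app (tsubst k A M) (tsubst k A N)
  | tlam M => tlam (tsubst (k+1) (FTy.shift 1 0 A) M)
  | tapp M B => tapp (tsubst k A M) (FTy.subst k A B)
  | star => star
  | guard M N => guard (tsubst k A M) (tsubst k A N)
  | gen B => gen (FTy.subst k A B)
  | verif B M => verif (FTy.subst k A B) (tsubst k A M)
  | nu e M => nu e (tsubst k A M)

/-- The free eigenvariables of a metaterm (ν binds an eigenvariable). -/
def eigs : MTm → Finset ℕ
  | var _ => ∅
  | lam M => M.eigs
  | app M N => M.eigs ∪ N.eigs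
  | tlam M => M.eigs
  | tapp M A => M.eigs ∪ A.eigs
  | star => ∅
  | guard M N => M.eigs ∪ N.eigs
  | gen A => A.eigs
  | verif A M => A.eigs ∪ M.eigs
  | nu e M => M.eigs.erase e

end MTm

/-- A canonical choice of an eigenvariable fresh for A and M. -/
def freshE (A : FTy) (M : MTm) : ℕ := (A.eigs ∪ M.eigs).sup (· + 1)

/-- One-step reduction of λFm, closed under arbitrary contexts. -/
inductive FStep : MTm → MTm → Prop
  | beta (M N) : FStep (.app (.lam M) N) (MTm.subst 0 N M)
  | tbeta (M A) : FStep (.tapp (.tlam M) A) (MTm.tsubst 0 A M)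
  | guardStar (M) : FStep (.guard .star M) M
  | verifGen (e) : FStep (.verif (.eig e) (.gen (.eig e))) .star
  | genArrow (A B) : FStep (.gen (.arrow A B)) (.lam (.guard (.verif A (.var 0)) (.gen B)))
  | verifArrow (A B M) : FStep (.verif (.arrow A B) M) (.verif B (.app M (.gen A)))
  | genAll (A) : FStep (.gen (.all A)) (.tlam (.gen A))
  | verifAll (A M) :
      FStep (.verif (.all A) M)
        (.nu (freshE A M)
          (.verif (FTy.subst 0 (.eig (freshE A M)) A) (.tapp M (.eig (freshE A M)))))
  | nuElim {e M} : e ∉ MTm.eigs M → FStep (.nu e M) M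
  | lam {M M'} : FStep M M' → FStep (.lam M) (.lam M')
  | appL {M M'} (N) : FStep M M' → FStep (.app M N) (.app M' N)
  | appR {N N'} (M) : FStep N N' → FStep (.app M N) (.app M N')
  | tlam {M M'} : FStep M M' → FStep (.tlam M) (.tlam M')
  | tappL {M M'} (A) : FStep M M' → FStep (.tapp M A) (.tapp M' A)
  | guardL {M M'} (N) : FStep M M' → FStep (.guard M N) (.guard M' N)
  | guardR {N N'} (M) : FStep N N' → FStep (.guard M N) (.guard M N')
  | verifC {M M'} (A) : FStep M M' → FStep (.verif A M) (.verif A M')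
  | nuC {M M'} (e) : FStep M M' → FStep (.nu e M) (.nu e M')

/-- Weak head reduction of λFm: the rules closed under weak head contexts
W ::= □ | W M | W A | (W;M) | ⟨A⟩W | ν𝐚.W. -/
inductive WFStep : MTm → MTm → Prop
  | beta (M N) : WFStep (.app (.lam M) N) (MTm.subst 0 N M)
  | tbeta (M A) : WFStep (.tapp (.tlam M) A) (MTm.tsubst 0 A M)
  | guardStar (M) : WFStep (.guard .star M) M
  | verifGen (e) : WFStep (.verif (.eig e) (.gen (.eig e))) .star
  | genArrow (A B) : WFStep (.gen (.arrow A B)) (.lam (.guard (.verif A (.var 0)) (.gen B)))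
  | verifArrow (A B M) : WFStep (.verif (.arrow A B) M) (.verif B (.app M (.gen A)))
  | genAll (A) : WFStep (.gen (.all A)) (.tlam (.gen A))
  | verifAll (A M) :
      WFStep (.verif (.all A) M)
        (.nu (freshE A M)
          (.verif (FTy.subst 0 (.eig (freshE A M)) A) (.tapp M (.eig (freshE A M)))))
  | nuElim {e M} : e ∉ MTm.eigs M → WFStep (.nu e M) M
  | appL {M M'} (N) : WFStep M M' → WFStep (.app M N) (.app M' N)
  | tappL {M M'} (A) : WFStep M M' → WFStep (.tapp M A) (.tapp M' A)
  | guardL {M M'} (N) : WFStep M M' → WFStep (.guard M N) (.guard M' N)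
  | verifC {M M'} (A) : WFStep M M' → WFStep (.verif A M) (.verif A M')
  | nuC {M M'} (e) : WFStep M M' → WFStep (.nu e M) (.nu e M')

namespace FTy

def size : FTy → ℕ
  | tvar _ => 1
  | eig _ => 1
  | arrow A B => A.size + B.size + 1
  | all A => A.size + 1

lemma size_subst_eig (A : FTy) : ∀ k e, (subst k (eig e) A).size = A.size := by
  induction A with
  | tvar n => intro k e; simp only [subst]; split; · rfl
              split <;> rfl
  | eig m => intro k e; rfl
  | arrow A B ihA ihB => intro k e; simp [subst, size, ihA, ihB]
  | all A ih => intro k e; simp only [subst, shift, size]; rw [ih]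

lemma tvclosed_subst_eig (A : FTy) : ∀ k c e, A.TvClosed (c+1) → k ≤ c →
    (subst k (eig e) A).TvClosed c := by
  induction A with
  | tvar n =>
    intro k c e h hk
    simp only [TvClosed] at h
    simp only [subst]
    split
    · trivial
    · split <;> simp only [TvClosed] <;> omega
  | eig m => intro k c e h hk; trivial
  | arrow A B ihA ihB =>
    intro k c e h hk
    exact ⟨ihA k c e h.1 hk, ihB k c e h.2 hk⟩
  | all A ih =>
    intro k c e h hk
    simp only [subst, shift, TvClosed]
    exact ih (k+1) (c+1) e h (by omega)

end FTy

open Relation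

lemma rtg_verifC (A : FTy) {M M' : MTm} (h : ReflTransGen WFStep M M') :
    ReflTransGen WFStep (.verif A M) (.verif A M') := by
  induction h with
  | refl => exact .refl
  | tail _ s ih => exact ih.tail (.verifC A s)

lemma rtg_guardL (N : MTm) {M M' : MTm} (h : ReflTransGen WFStep M M') :
    ReflTransGen WFStep (.guard M N) (.guard M' N) := by
  induction h with
  | refl => exact .refl
  | tail _ s ih => exact ih.tail (.guardL N s)

lemma rtg_nuC (e : ℕ) {M M' : MTm} (h : ReflTransGen WFStep M M') :
    ReflTransGen WFStep (.nu e M) (.nu e M') := by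
  induction h with
  | refl => exact .refl
  | tail _ s ih => exact ih.tail (.nuC e s)

lemma f_correct_aux : ∀ n A, FTy.size A ≤ n → FTy.TvClosed A 0 →
    Relation.ReflTransGen WFStep (MTm.verif A (MTm.gen A)) MTm.star := by
  intro n
  induction n with
  | zero => intro A h; cases A <;> simp [FTy.size] at h
  | succ n ih =>
    intro A h hA
    cases A with
    | tvar k => simp [FTy.TvClosed] at hA
    | eig e => exact .single (.verifGen e)
    | arrow A B =>
      have hs : A.size ≤ n ∧ B.size ≤ n := by simp [FTy.size] at h; omega
      obtain ⟨hA0, hB0⟩ := hA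
      refine .head (.verifArrow A B _) ?_
      refine .head (.verifC B (.appL _ (.genArrow A B))) ?_
      refine .head (.verifC B (.beta _ _)) ?_
      simp only [MTm.subst]
      have step4 := rtg_verifC B (rtg_guardL (MTm.gen B)
        (ih A hs.1 hA0))
      refine step4.trans ?_
      refine .head (.verifC B (.guardStar _)) ?_
      exact ih B hs.2 hB0
    | all A =>
      set e := freshE A (MTm.gen (A.all)) with he
      set A' := FTy.subst 0 (.eig e) A with hA'
      refine .head (.verifAll A _) ?_
      refine .head (.nuC e (.verifC A' (.tappL _ (.genAll A)))) ?_
      refine .head (.nuC e (.verifC A' (.tbeta _ _))) ?_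
      simp only [MTm.tsubst]
      have hsize : A'.size ≤ n := by
        rw [hA', FTy.size_subst_eig A 0 e]
        simp [FTy.size] at h; omega
      have hcl : A'.TvClosed 0 := FTy.tvclosed_subst_eig A 0 0 e hA (le_refl 0)
      have := rtg_nuC e (ih A' hsize hcl)
      refine this.trans ?_
      exact .single (.nuElim (by simp [MTm.eigs]))

/-- Correctness for λFm: for every type A with no free type
variables (eigenvariables allowed), ⟨A⟩(✠A) weak-head reduces to ⋆. -/
theorem f_correctness (A : FTy) (hA : A.TvClosed 0) :
    Relation.ReflTransGen WFStep (MTm.verif A (MTm.gen A)) MTm.star := by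
  exact f_correct_aux A.size A le_rfl hA
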